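/- Discrete pressure recovery / discrete de Rham lemma (eq. (166)): assume (SgnCancel): for every primary cell i and every vertex ν, the sum of t_{e,ν}·n_{e,i} over all edges e incident to both i and ν equals 0; (Euler): card C + card V = card E + 1; (KerSkew): the only dual scalar field ψ with ∇̃⊥_h ψ = 0 is ψ = 0; and (KerGrad): every primary scalar field φ with ∇_h φ = 0 is constant. If a discrete vector field g ∈ ℝ^E satisfies (g, v)_0 = 0 for every discrete vector field v with ∇_h·v = 0, then there exists a primary discrete scalar field p such that g = ∇_h p, and p is unique up to an additive constant. -/

import Mathlib

open Finset

noncomputable section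

/-- A combinatorial staggered mesh: primary cells `C`, dual cells (vertices) `V`,
edges `E`, with areas, edge lengths, incidence relations and signs. -/
structure StagMesh (C V E : Type) [Fintype C] [Fintype V] [Fintype E]
    [DecidableEq C] [DecidableEq V] where
  /-- primary cell areas -/
  Ac : C → ℝ
  /-- dual cell areas -/
  Av : V → ℝ
  /-- primary edge lengths -/
  l : E → ℝ
  /-- dual edge lengths -/
  d : E → ℝ
  Ac_pos : ∀ i, 0 < Ac i
  Av_pos : ∀ ν, 0 < Av ν
  l_pos : ∀ e, 0 < l e
  d_pos : ∀ e, 0 < d e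
  /-- primary cells incident to an edge -/
  EC : E → Finset C
  /-- vertices (dual cells) incident to an edge -/
  EV : E → Finset V
  /-- sign `n_{e,i}` attached to an incident edge–cell pair -/
  n : E → C → ℝ
  /-- sign `t_{e,ν}` attached to an incident edge–vertex pair -/
  t : E → V → ℝ
  n_sign : ∀ e i, i ∈ EC e → n e i = 1 ∨ n e i = -1
  t_sign : ∀ e ν, ν ∈ EV e → t e ν = 1 ∨ t e ν = -1

namespace StagMesh

variable {C V E : Type} [Fintype C] [Fintype V] [Fintype E]
  [DecidableEq C] [DecidableEq V]

/-- diamond area `A_e = (1/2) l_e d_e` -/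
def Ae (M : StagMesh C V E) (e : E) : ℝ := (1 / 2) * M.l e * M.d e

/-- discrete gradient `[∇_h φ]_e = -(1/d_e) Σ_{i ~ e} n_{e,i} φ_i` -/
def grad (M : StagMesh C V E) (φ : C → ℝ) : E → ℝ :=
  fun e => -(1 / M.d e) * ∑ i ∈ M.EC e, M.n e i * φ i

/-- discrete skew gradient `[∇̃⊥_h ψ]_e = (1/l_e) Σ_{ν ~ e} t_{e,ν} ψ_ν` -/
def skewGrad (M : StagMesh C V E) (ψ : V → ℝ) : E → ℝ :=
  fun e => (1 / M.l e) * ∑ ν ∈ M.EV e, M.t e ν * ψ ν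

/-- discrete divergence `[∇_h·u]_i = (1/A_i) Σ_{e ~ i} l_e n_{e,i} u_e` -/
def dvg (M : StagMesh C V E) (u : E → ℝ) : C → ℝ :=
  fun i => (1 / M.Ac i) * ∑ e ∈ univ.filter (fun e => i ∈ M.EC e), M.l e * M.n e i * u e

/-- discrete curl `[∇̃_h×u]_ν = -(1/A_ν) Σ_{e ~ ν} d_e t_{e,ν} u_e` -/
def curl (M : StagMesh C V E) (u : E → ℝ) : V → ℝ :=
  fun ν => -(1 / M.Av ν) * ∑ e ∈ univ.filter (fun e => ν ∈ M.EV e), M.d e * M.t e ν * u e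

/-- area-weighted inner product on primary scalar fields -/
def innerC (M : StagMesh C V E) (φ φ' : C → ℝ) : ℝ := ∑ i, M.Ac i * φ i * φ' i

/-- area-weighted inner product on dual scalar fields -/
def innerV (M : StagMesh C V E) (ψ ψ' : V → ℝ) : ℝ := ∑ ν, M.Av ν * ψ ν * ψ' ν

/-- diamond-weighted inner product on discrete vector fields -/
def innerE (M : StagMesh C V E) (u u' : E → ℝ) : ℝ := ∑ e, M.Ae e * u e * u' e

/-- weighted `L²` norm on primary scalar fields -/
noncomputable def normC (M : StagMesh C V E) (φ : C → ℝ) : ℝ := Real.sqrt (M.innerC φ φ)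

/-- weighted `L²` norm on dual scalar fields -/
noncomputable def normV (M : StagMesh C V E) (ψ : V → ℝ) : ℝ := Real.sqrt (M.innerV ψ ψ)

/-- weighted `L²` norm on discrete vector fields -/
noncomputable def normE (M : StagMesh C V E) (u : E → ℝ) : ℝ := Real.sqrt (M.innerE u u)

/-- sign-cancellation condition: for every primary cell `i` and vertex `ν`,
`Σ_{e ~ i, e ~ ν} t_{e,ν} n_{e,i} = 0`. -/
def SgnCancel (M : StagMesh C V E) : Prop :=
  ∀ (i : C) (ν : V),
    ∑ e ∈ univ.filter (fun e => i ∈ M.EC e ∧ ν ∈ M.EV e), M.t e ν * M.n e i = 0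

end StagMesh

open StagMesh

section Aux

variable {C V E : Type} [Fintype C] [Fintype V] [Fintype E]
  [DecidableEq C] [DecidableEq V]

/-- discrete gradient as a linear map -/
def gradL (M : StagMesh C V E) : (C → ℝ) →ₗ[ℝ] (E → ℝ) where
  toFun := M.grad
  map_add' φ φ' := by
    funext e
    simp [StagMesh.grad, mul_add, Finset.sum_add_distrib]
  map_smul' c φ := by
    funext e
    simp [StagMesh.grad, Finset.mul_sum]
    exact Finset.sum_congr rfl fun i _ => by ring

/-- discrete divergence as a linear map -/
def dvgL (M : StagMesh C V E) : (E → ℝ) →ₗ[ℝ] (C → ℝ) where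
  toFun := M.dvg
  map_add' u u' := by
    funext i
    simp [StagMesh.dvg, mul_add, Finset.sum_add_distrib]
  map_smul' c u := by
    funext i
    simp [StagMesh.dvg, Finset.mul_sum]
    exact Finset.sum_congr rfl fun e _ => by ring

lemma sum_swap_inc (M : StagMesh C V E) (F : E → C → ℝ) :
    ∑ e, ∑ i ∈ M.EC e, F e i
      = ∑ i, ∑ e ∈ univ.filter (fun e => i ∈ M.EC e), F e i := by
  calc ∑ e, ∑ i ∈ M.EC e, F e i
      = ∑ e, ∑ i : C, if i ∈ M.EC e then F e i else 0 := by
        apply Finset.sum_congr rfl; intro e _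
        rw [Finset.sum_ite_mem, Finset.univ_inter]
    _ = ∑ i : C, ∑ e, if i ∈ M.EC e then F e i else 0 := Finset.sum_comm
    _ = ∑ i, ∑ e ∈ univ.filter (fun e => i ∈ M.EC e), F e i := by
        apply Finset.sum_congr rfl; intro i _
        rw [Finset.sum_filter]

/-- adjointness identity: `(∇h φ, v)_E = ∑_i φ i * (-(1/2) A_i (div v)_i)` -/
lemma adjoint_id (M : StagMesh C V E) (φ : C → ℝ) (v : E → ℝ) :
    M.innerE (M.grad φ) v = ∑ i, φ i * (-(1/2) * M.Ac i * M.dvg v i) := by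
  unfold StagMesh.innerE StagMesh.grad StagMesh.dvg StagMesh.Ae
  have h1 : ∀ e : E,
      (1 / 2 * M.l e * M.d e) * (-(1 / M.d e) * ∑ i ∈ M.EC e, M.n e i * φ i) * v e
        = ∑ i ∈ M.EC e, (-(1/2)) * M.l e * M.n e i * φ i * v e := by
    intro e
    have hd := (M.d_pos e).ne'
    rw [Finset.mul_sum, Finset.mul_sum, Finset.sum_mul]
    apply Finset.sum_congr rfl
    intro i _
    field_simp
  rw [Finset.sum_congr rfl (fun e _ => h1 e), sum_swap_inc M]
  apply Finset.sum_congr rfl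
  intro i _
  have hA := (M.Ac_pos i).ne'
  rw [show φ i * (-(1/2) * M.Ac i * ((1 / M.Ac i) *
        ∑ e ∈ univ.filter (fun e => i ∈ M.EC e), M.l e * M.n e i * v e))
      = (M.Ac i * (1 / M.Ac i)) *
        ((-(1/2)) * φ i * ∑ e ∈ univ.filter (fun e => i ∈ M.EC e), M.l e * M.n e i * v e) by ring,
    mul_one_div_cancel hA, one_mul, Finset.mul_sum]
  apply Finset.sum_congr rfl
  intro e _; ring

end Aux

/-- discrete pressure recovery (discrete de Rham lemma): under the
standing mesh hypotheses, if a discrete vector field `g` is orthogonal to every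
divergence-free discrete vector field, then `g = ∇_h p` for some primary scalar
field `p`, unique up to an additive constant. -/
theorem pressure_recovery
    {C V E : Type} [Fintype C] [Fintype V] [Fintype E]
    [DecidableEq C] [DecidableEq V]
    (M : StagMesh C V E)
    (hsc : M.SgnCancel)
    (heuler : Fintype.card C + Fintype.card V = Fintype.card E + 1)
    (hks : ∀ ψ : V → ℝ, M.skewGrad ψ = 0 → ψ = 0)
    (hkg : ∀ φ : C → ℝ, M.grad φ = 0 → ∀ i j : C, φ i = φ j)
    (g : E → ℝ)
    (hg : ∀ v : E → ℝ, M.dvg v = 0 → M.innerE g v = 0) :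
    (∃ p : C → ℝ, g = M.grad p) ∧
    (∀ p p' : C → ℝ, g = M.grad p → g = M.grad p' → ∃ c : ℝ, ∀ i, p i = p' i + c) := by
  classical
  have hAe : ∀ e, 0 < M.Ae e := fun e => by
    have h1 := M.l_pos e; have h2 := M.d_pos e
    unfold StagMesh.Ae; positivity
  constructor
  · -- existence
    set w : E → ℝ := fun e => Real.sqrt (M.Ae e) with hwdef
    have hw : ∀ e, 0 < w e := fun e => Real.sqrt_pos.2 (hAe e)
    let ι : (E → ℝ) ≃ₗ[ℝ] EuclideanSpace ℝ E :=
    { toFun := fun u => WithLp.toLp 2 (fun e => w e * u e)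
      invFun := fun x e => (w e)⁻¹ * x e
      map_add' := by intro u v; ext e; simp [mul_add]
      map_smul' := by intro c u; ext e; simp; ring
      left_inv := by intro u; funext e; exact inv_mul_cancel_left₀ (hw e).ne' _
      right_inv := by intro x; ext e; exact mul_inv_cancel_left₀ (hw e).ne' _ }
    have hinner : ∀ u v : E → ℝ, (inner ℝ (ι u) (ι v) : ℝ) = M.innerE u v := by
      intro u v
      rw [PiLp.inner_apply]
      unfold StagMesh.innerE
      apply Finset.sum_congr rfl
      intro e _
      rw [RCLike.inner_apply', conj_trivial]
      show (w e * u e) * (w e * v e) = M.Ae e * u e * v e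
      rw [show (w e * u e) * (w e * v e) = (w e * w e) * u e * v e by ring]
      rw [show w e * w e = M.Ae e from Real.mul_self_sqrt (hAe e).le]
    let R : Submodule ℝ (EuclideanSpace ℝ E) := (LinearMap.range (gradL M)).map ι.toLinearMap
    let K : Submodule ℝ (EuclideanSpace ℝ E) := (LinearMap.ker (dvgL M)).map ι.toLinearMap
    have hKR : K = Rᗮ := by
      ext x
      constructor
      · rintro ⟨v, hv, rfl⟩
        rw [Submodule.mem_orthogonal]
        rintro y ⟨u, ⟨φ, rfl⟩, rfl⟩
        show (inner ℝ (ι (gradL M φ)) (ι v) : ℝ) = 0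
        rw [hinner]
        have hgr : gradL M φ = M.grad φ := rfl
        rw [hgr, adjoint_id]
        have hv0 : M.dvg v = 0 := hv
        apply Finset.sum_eq_zero
        intro i _
        rw [show M.dvg v i = 0 from congrFun hv0 i]
        ring
      · intro hx
        refine ⟨ι.symm x, ?_, ι.apply_symm_apply x⟩
        show M.dvg (ι.symm x) = 0
        have h := (Submodule.mem_orthogonal _ _).mp hx
        have key : ∀ φ : C → ℝ, ∑ j, φ j * (-(1/2) * M.Ac j * M.dvg (ι.symm x) j) = 0 := by
          intro φ
          rw [← adjoint_id]
          have h2 := h (ι (M.grad φ)) ⟨M.grad φ, ⟨φ, rfl⟩, rfl⟩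
          rw [show ι (M.grad φ) = ι (M.grad φ) from rfl] at h2
          have h3 : (inner ℝ (ι (M.grad φ)) (ι (ι.symm x)) : ℝ) = 0 := by
            rwa [ι.apply_symm_apply]
          rw [hinner] at h3
          exact h3
        funext i
        have hi := key (fun j => if j = i then 1 else 0)
        simp only [ite_mul, one_mul, zero_mul, Finset.sum_ite_eq', Finset.mem_univ,
          if_true] at hi
        have hA := (M.Ac_pos i).ne'
        have : (-(1/2) * M.Ac i) * M.dvg (ι.symm x) i = 0 := by linarith [hi]
        rcases mul_eq_zero.mp this with h' | h'
        · exfalso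
          have : M.Ac i ≠ 0 := hA
          have : (-(1/2) : ℝ) * M.Ac i ≠ 0 := by
            apply mul_ne_zero _ hA; norm_num
          exact this h'
        · exact h'
    have hginK : ι g ∈ Kᗮ := by
      rw [Submodule.mem_orthogonal]
      rintro y ⟨v, hv, rfl⟩
      show (inner ℝ (ι v) (ι g) : ℝ) = 0
      rw [hinner]
      have hsymm : M.innerE v g = M.innerE g v := by
        unfold StagMesh.innerE
        apply Finset.sum_congr rfl
        intro e _; ring
      rw [hsymm]
      exact hg v hv
    rw [hKR, Submodule.orthogonal_orthogonal] at hginK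
    obtain ⟨u, ⟨p, hp⟩, hu⟩ := hginK
    refine ⟨p, ?_⟩
    have hug : u = g := ι.injective hu
    rw [← hug, ← hp]
    rfl
  · intro p p' hp hp'
    have hz : M.grad (fun i => p i - p' i) = 0 := by
      have h1 : gradL M (p - p') = 0 := by
        rw [map_sub]
        show M.grad p - M.grad p' = 0
        rw [← hp, ← hp']
        simp
      exact h1
    have hc := hkg _ hz
    by_cases hC : Nonempty C
    · obtain ⟨j⟩ := hC
      refine ⟨p j - p' j, fun i => ?_⟩
      have := hc i j
      linarith
    · exact ⟨0, fun i => absurd ⟨i⟩ hC⟩
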